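/- Let (V,g) be a finite-dimensional real inner product space and let J, K be orthogonal complex structures on V. Then the rank of the commutator [J,K] is divisible by 4. -/

import Mathlib

open Module LinearMap
open scoped DirectSum

theorem four_dvd_finrank_of_anticomm {M : Type*} [AddCommGroup M] [Module ℝ M]
    [FiniteDimensional ℝ M] (J T : Module.End ℝ M)
    (hJ : J * J = -1) (hT : T * T = -1) (h : J * T = -(T * J)) :
    4 ∣ Module.finrank ℝ M := by
  let B : QuaternionAlgebra.Basis (Module.End ℝ M) (-1 : ℝ) (0 : ℝ) (-1 : ℝ) :=
    { i := J, j := T, k := J * T,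
      i_mul_i := by rw [hJ]; simp,
      j_mul_j := by rw [hT]; simp,
      i_mul_j := rfl,
      j_mul_i := by rw [← neg_eq_iff_eq_neg.mpr h]; simp }
  let φ : Quaternion ℝ →ₐ[ℝ] Module.End ℝ M := B.liftHom
  letI : Module (Quaternion ℝ) M := Module.compHom M φ.toRingHom
  haveI : IsScalarTower ℝ (Quaternion ℝ) M := by
    constructor
    intro r q v
    show φ (r • q) v = r • (φ q v)
    rw [map_smul]
    rfl
  haveI : Module.Finite (Quaternion ℝ) M :=
    Module.Finite.of_restrictScalars_finite ℝ (Quaternion ℝ) M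
  have := Module.finrank_mul_finrank ℝ (Quaternion ℝ) M
  rw [Quaternion.finrank_eq_four] at this
  exact ⟨finrank (Quaternion ℝ) M, this.symm⟩

/-- For orthogonal complex structures `J, K` on a finite-dimensional real
inner product space, the rank of the commutator `[J,K] = JK - KJ` is divisible by 4. -/
theorem four_dvd_rank_commutator
    (V : Type*) [NormedAddCommGroup V] [InnerProductSpace ℝ V] [FiniteDimensional ℝ V]
    (J K : Module.End ℝ V) (hJ : J * J = -1) (hK : K * K = -1)
    (hJg : ∀ v w : V, @inner ℝ V _ (J v) (J w) = @inner ℝ V _ v w)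
    (hKg : ∀ v w : V, @inner ℝ V _ (K v) (K w) = @inner ℝ V _ v w) :
    4 ∣ Module.finrank ℝ (LinearMap.range (J * K - K * J)) := by
  classical
  set C : Module.End ℝ V := J * K - K * J with hCdef
  have hJJ : ∀ v : V, J (J v) = -v := fun v => by
    have := congrArg (fun f : Module.End ℝ V => f v) hJ; simpa using this
  have hKK : ∀ v : V, K (K v) = -v := fun v => by
    have := congrArg (fun f : Module.End ℝ V => f v) hK; simpa using this
  have skewJ : ∀ v w : V, @inner ℝ V _ (J v) w = -@inner ℝ V _ v (J w) := by
    intro v w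
    have hw : w = -(J (J w)) := by rw [hJJ]; simp
    calc @inner ℝ V _ (J v) w = @inner ℝ V _ (J v) (-(J (J w))) := by rw [← hw]
      _ = -@inner ℝ V _ (J v) (J (J w)) := by rw [inner_neg_right]
      _ = -@inner ℝ V _ v (J w) := by rw [hJg]
  have skewK : ∀ v w : V, @inner ℝ V _ (K v) w = -@inner ℝ V _ v (K w) := by
    intro v w
    have hw : w = -(K (K w)) := by rw [hKK]; simp
    calc @inner ℝ V _ (K v) w = @inner ℝ V _ (K v) (-(K (K w))) := by rw [← hw]
      _ = -@inner ℝ V _ (K v) (K (K w)) := by rw [inner_neg_right]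
      _ = -@inner ℝ V _ v (K w) := by rw [hKg]
  have hCapp : ∀ v : V, C v = J (K v) - K (J v) := fun v => rfl
  have skewC : ∀ v w : V, @inner ℝ V _ (C v) w = -@inner ℝ V _ v (C w) := by
    intro v w
    rw [hCapp, hCapp, inner_sub_left, inner_sub_right]
    have h1 : @inner ℝ V _ (J (K v)) w = @inner ℝ V _ v (K (J w)) := by
      rw [skewJ, skewK]; ring
    have h2 : @inner ℝ V _ (K (J v)) w = @inner ℝ V _ v (J (K w)) := by
      rw [skewK, skewJ]; ring
    rw [h1, h2]; ring
  set S : Module.End ℝ V := -(C * C) with hSdef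
  have hSapp : ∀ v : V, S v = -(C (C v)) := fun v => rfl
  have hS : (S : V →ₗ[ℝ] V).IsSymmetric := by
    intro x y
    have h1 := skewC (C x) y
    have h2 := skewC x (C y)
    rw [hSapp, hSapp, inner_neg_left, inner_neg_right]
    linarith
  -- C anticommutes with J
  have hJC : J * C = -(C * J) := by
    have hid : J * C + C * J = (J * J) * K - K * (J * J) := by
      rw [hCdef]; noncomm_ring
    rw [hJ] at hid
    simp only [neg_one_mul, mul_neg_one, sub_neg_eq_add, neg_add_cancel] at hid
    exact eq_neg_of_add_eq_zero_left hid
  have hJS : J * S = S * J := by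
    calc J * S = -((J * C) * C) := by rw [hSdef, mul_neg, mul_assoc]
      _ = ((C * J) * C) := by rw [hJC]; simp only [neg_mul, neg_neg]
      _ = C * (J * C) := by rw [mul_assoc]
      _ = C * (-(C * J)) := by rw [hJC]
      _ = -((C * C) * J) := by rw [mul_neg, mul_assoc]
      _ = S * J := by rw [hSdef, neg_mul]
  have hCS : C * S = S * C := by rw [hSdef]; noncomm_ring
  -- kernel of C equals kernel of S
  have hkerCS : LinearMap.ker C = LinearMap.ker S := by
    ext v
    simp only [LinearMap.mem_ker]
    constructor
    · intro h; rw [hSapp, h, map_zero, neg_zero]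
    · intro h
      have h0 : @inner ℝ V _ (C v) (C v) = 0 := by
        have h1 := skewC (C v) v
        have h2 : @inner ℝ V _ (S v) v = 0 := by rw [h, inner_zero_left]
        rw [hSapp, inner_neg_left] at h2
        linarith
      exact inner_self_eq_zero.mp h0
  -- spectral decomposition of S
  have hInt := hS.direct_sum_isInternal
  have e := (LinearEquiv.ofBijective (DirectSum.coeLinearMap _) hInt).symm
  have hdim : finrank ℝ V
      = ∑ μ : Module.End.Eigenvalues S, finrank ℝ (Module.End.eigenspace S ↑μ) := by
    rw [e.finrank_eq, Module.finrank_directSum]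
  have hrn := LinearMap.finrank_range_add_finrank_ker (C : V →ₗ[ℝ] V)
  have hker0 : ∑ μ ∈ Finset.univ.filter (fun μ : Module.End.Eigenvalues S => (μ : ℝ) = 0),
      finrank ℝ (Module.End.eigenspace S ↑μ) = finrank ℝ (LinearMap.ker S) := by
    by_cases h0 : Module.End.HasEigenvalue S 0
    · have hfe : Finset.univ.filter (fun μ : Module.End.Eigenvalues S => (μ : ℝ) = 0)
          = {(show Module.End.Eigenvalues S from ⟨0, h0⟩)} := by
        ext μ
        simp only [Finset.mem_filter, Finset.mem_univ, true_and, Finset.mem_singleton]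
        exact ⟨fun h => Finset.mem_singleton.mpr (Subtype.ext (show Subtype.val μ = (0:ℝ) from h)),
          fun h => by rw [Finset.mem_singleton.mp h]; rfl⟩
      rw [hfe, Finset.sum_singleton]
      exact congrArg (fun W : Submodule ℝ V => finrank ℝ W) (Module.End.eigenspace_zero S)
    · have hfe : Finset.univ.filter (fun μ : Module.End.Eigenvalues S => (μ : ℝ) = 0)
          = ∅ := by
        ext μ
        simp only [Finset.mem_filter, Finset.mem_univ, true_and, Finset.notMem_empty, iff_false]
        exact fun h => h0 (by have := μ.2; rwa [show Subtype.val μ = (0:ℝ) from h] at this)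
      rw [hfe, Finset.sum_empty]
      have hbot : LinearMap.ker S = ⊥ := by
        rw [← Module.End.eigenspace_zero S]
        by_contra hne
        exact h0 (Module.End.hasEigenvalue_iff.mpr hne)
      rw [hbot, finrank_bot]
  have hsum := Finset.sum_filter_add_sum_filter_not Finset.univ
      (fun μ : Module.End.Eigenvalues S => (μ : ℝ) = 0)
      (fun μ => finrank ℝ (Module.End.eigenspace S ↑μ))
  have hkk : finrank ℝ (LinearMap.ker C) = finrank ℝ (LinearMap.ker S) := by rw [hkerCS]
  have hrange : finrank ℝ (LinearMap.range C)
      = ∑ μ ∈ Finset.univ.filter (fun μ : Module.End.Eigenvalues S => ¬((μ : ℝ) = 0)),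
        finrank ℝ (Module.End.eigenspace S ↑μ) := by
    omega
  rw [hrange]
  refine Finset.dvd_sum ?_
  intro μ hμmem
  rw [Finset.mem_filter] at hμmem
  have hμ0 : (μ : ℝ) ≠ 0 := hμmem.2
  obtain ⟨v, hv⟩ := Module.End.HasEigenvalue.exists_hasEigenvector μ.2
  have hSv : S v = (μ : ℝ) • v := hv.apply_eq_smul
  have hμpos : 0 < (μ : ℝ) := by
    have h2 : @inner ℝ V _ (S v) v = (μ : ℝ) * @inner ℝ V _ v v := by
      rw [hSv, real_inner_smul_left]
    have h3 : @inner ℝ V _ (S v) v = @inner ℝ V _ (C v) (C v) := by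
      have hsk := skewC (C v) v
      rw [hSapp, inner_neg_left]
      linarith
    have h4 : (0:ℝ) ≤ @inner ℝ V _ (C v) (C v) := real_inner_self_nonneg
    have h5 : (0:ℝ) < @inner ℝ V _ v v := by
      have h6 : @inner ℝ V _ v v ≠ 0 := inner_self_ne_zero.mpr hv.2
      have h7 : (0:ℝ) ≤ @inner ℝ V _ v v := real_inner_self_nonneg
      exact lt_of_le_of_ne h7 (Ne.symm h6)
    rcases lt_trichotomy (0:ℝ) (μ:ℝ) with h | h | h
    · exact h
    · exact absurd h.symm hμ0
    · nlinarith
  set E := Module.End.eigenspace S (μ : ℝ) with hEdef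
  have hJE : ∀ x ∈ E, J x ∈ E := by
    intro x hx
    rw [hEdef, Module.End.mem_eigenspace_iff] at hx ⊢
    have h1 : S (J x) = J (S x) := by
      have := congrArg (fun f : Module.End ℝ V => f x) hJS
      simpa using this.symm
    rw [h1, hx, map_smul]
  have hCE : ∀ x ∈ E, C x ∈ E := by
    intro x hx
    rw [hEdef, Module.End.mem_eigenspace_iff] at hx ⊢
    have h1 : S (C x) = C (S x) := by
      have := congrArg (fun f : Module.End ℝ V => f x) hCS
      simpa using this.symm
    rw [h1, hx, map_smul]
  let J' : Module.End ℝ E := J.restrict hJE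
  let C' : Module.End ℝ E := C.restrict hCE
  set a : ℝ := (Real.sqrt (μ : ℝ))⁻¹ with hadef
  let T' : Module.End ℝ E := a • C'
  have hJ'2 : J' * J' = -1 := by
    ext x
    show (J (J (x:V)) : V) = _
    rw [hJJ]
    rfl
  have hC'2 : ∀ x : E, C' (C' x) = -((μ : ℝ) • x) := by
    intro x
    apply Subtype.ext
    show (C (C (x:V)) : V) = -((μ : ℝ) • (x:V))
    have hx : S (x:V) = (μ : ℝ) • (x:V) := Module.End.mem_eigenspace_iff.mp x.2
    have hss := hSapp (x:V)
    rw [hx] at hss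
    rw [hss, neg_neg]
  have haa : a * a * (μ : ℝ) = 1 := by
    rw [hadef, ← mul_inv]
    rw [Real.mul_self_sqrt hμpos.le]
    exact inv_mul_cancel₀ hμ0
  have hT'2 : T' * T' = -1 := by
    ext x
    show (((a • C') * (a • C')) x : V) = ((-1 : Module.End ℝ E) x : V)
    have h1 : ((a • C') * (a • C')) x = (a * a) • (C' (C' x)) := by
      simp [Module.End.mul_apply, smul_smul]
    rw [h1, hC'2 x]
    have : (a * a) • (-((μ : ℝ) • x)) = -x := by
      rw [smul_neg, smul_smul, mul_assoc]
      rw [show a * (a * (μ:ℝ)) = a * a * (μ:ℝ) by ring, haa, one_smul]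
    rw [this]
    rfl
  have hJC' : J' * C' = -(C' * J') := by
    ext x
    show (J (C (x:V)) : V) = -(C (J (x:V)))
    have := congrArg (fun f : Module.End ℝ V => f (x:V)) hJC
    simpa using this
  have hanti : J' * T' = -(T' * J') := by
    show J' * (a • C') = -((a • C') * J')
    rw [mul_smul_comm, smul_mul_assoc, hJC', smul_neg]
  exact four_dvd_finrank_of_anticomm J' T' hJ'2 hT'2 hanti
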